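/- For ρ > 0 sufficiently small, the quantity F̃(ρ) = ∫₀^{2π/3} (ρ + sin² y)^{1/2} (3/4 − sin² y) dy is strictly positive, while F̃(0) = 0. -/

import Mathlib

open Real intervalIntegral

lemma skyrme_sin_w_int :
    (∫ y in (0:ℝ)..(2 * Real.pi / 3), Real.sin y * (3/4 - Real.sin y ^ 2)) = 0 := by
  have h : ∀ x ∈ Set.uIcc (0:ℝ) (2 * Real.pi / 3),
      HasDerivAt (fun y => Real.cos y / 4 - Real.cos y ^ 3 / 3)
        (Real.sin x * (3/4 - Real.sin x ^ 2)) x := by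
    intro x _
    have h1 := ((Real.hasDerivAt_cos x).div_const 4).sub
      (((Real.hasDerivAt_cos x).pow 3).div_const 3)
    refine h1.congr_deriv (Eq.symm ?_)
    have hsc := Real.sin_sq_add_cos_sq x
    push_cast
    linear_combination (-Real.sin x) * hsc
  rw [intervalIntegral.integral_eq_sub_of_hasDerivAt h
    (((Real.continuous_sin.mul (continuous_const.sub
      (Real.continuous_sin.pow 2)))).intervalIntegrable _ _)]
  have hc : Real.cos (2 * Real.pi / 3) = -(1/2) := by
    rw [show 2 * Real.pi / 3 = Real.pi - Real.pi / 3 by ring, Real.cos_pi_sub,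
      Real.cos_pi_div_three]
  rw [hc, Real.cos_zero]
  norm_num

lemma skyrme_w_int :
    (∫ y in (0:ℝ)..(2 * Real.pi / 3), (3/4 - Real.sin y ^ 2)) =
      Real.pi / 6 - Real.sqrt 3 / 8 := by
  have h : ∀ x ∈ Set.uIcc (0:ℝ) (2 * Real.pi / 3),
      HasDerivAt (fun y => y / 4 + Real.sin y * Real.cos y / 2)
        (3/4 - Real.sin x ^ 2) x := by
    intro x _
    have h1 := ((hasDerivAt_id x).div_const 4).add
      (((Real.hasDerivAt_sin x).mul (Real.hasDerivAt_cos x)).div_const 2)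
    refine h1.congr_deriv (Eq.symm ?_)
    have hsc := Real.sin_sq_add_cos_sq x
    linear_combination (-(1:ℝ)/2) * hsc
  rw [intervalIntegral.integral_eq_sub_of_hasDerivAt h
    ((continuous_const.sub (Real.continuous_sin.pow 2)).intervalIntegrable _ _)]
  have hc : Real.cos (2 * Real.pi / 3) = -(1/2) := by
    rw [show 2 * Real.pi / 3 = Real.pi - Real.pi / 3 by ring, Real.cos_pi_sub,
      Real.cos_pi_div_three]
  have hs : Real.sin (2 * Real.pi / 3) = Real.sqrt 3 / 2 := by
    rw [show 2 * Real.pi / 3 = Real.pi - Real.pi / 3 by ring, Real.sin_pi_sub,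
      Real.sin_pi_div_three]
  rw [hc, hs, Real.sin_zero]
  ring

lemma skyrme_key (ρ s t : ℝ) (hρ : 0 ≤ ρ) (hs : 0 ≤ s) (hst : s ≤ t) :
    Real.sqrt (ρ + t ^ 2) - t ≤ Real.sqrt (ρ + s ^ 2) - s := by
  have h1 : s ≤ Real.sqrt (ρ + s ^ 2) := by
    have := Real.sqrt_le_sqrt (show s ^ 2 ≤ ρ + s ^ 2 by linarith)
    rwa [Real.sqrt_sq hs] at this
  have h2 : (Real.sqrt (ρ + s ^ 2)) ^ 2 = ρ + s ^ 2 := Real.sq_sqrt (by positivity)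
  have hX : 0 ≤ Real.sqrt (ρ + s ^ 2) + (t - s) :=
    add_nonneg (Real.sqrt_nonneg _) (by linarith)
  have hle : ρ + t ^ 2 ≤ (Real.sqrt (ρ + s ^ 2) + (t - s)) ^ 2 := by
    nlinarith [mul_nonneg (sub_nonneg.2 hst) (sub_nonneg.2 h1)]
  have := Real.sqrt_le_sqrt hle
  rw [Real.sqrt_sq hX] at this
  linarith

theorem skyrme_stmt2 :
    (∫ y in (0:ℝ)..(2 * Real.pi / 3),
        Real.sqrt ((0:ℝ) + Real.sin y ^ 2) * (3/4 - Real.sin y ^ 2)) = 0 ∧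
    ∃ ρ₀ > (0:ℝ), ∀ ρ : ℝ, 0 < ρ → ρ < ρ₀ →
      0 < ∫ y in (0:ℝ)..(2 * Real.pi / 3),
        Real.sqrt (ρ + Real.sin y ^ 2) * (3/4 - Real.sin y ^ 2) := by
  have hpi : 0 < Real.pi := Real.pi_pos
  have hab : (0:ℝ) ≤ 2 * Real.pi / 3 := by linarith
  have hsinpos : ∀ y ∈ Set.Icc (0:ℝ) (2 * Real.pi / 3), 0 ≤ Real.sin y := by
    intro y hy
    exact Real.sin_nonneg_of_nonneg_of_le_pi hy.1 (by rcases hy with ⟨_, h2⟩; linarith)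
  have ha : (Real.sqrt 3 / 2) ^ 2 = 3/4 := by
    rw [div_pow, Real.sq_sqrt (by norm_num : (0:ℝ) ≤ 3)]; norm_num
  have ha0 : (0:ℝ) ≤ Real.sqrt 3 / 2 := by positivity
  constructor
  · have heq : Set.EqOn
        (fun y => Real.sqrt ((0:ℝ) + Real.sin y ^ 2) * (3/4 - Real.sin y ^ 2))
        (fun y => Real.sin y * (3/4 - Real.sin y ^ 2))
        (Set.uIcc (0:ℝ) (2 * Real.pi / 3)) := by
      intro y hy
      rw [Set.uIcc_of_le hab] at hy
      simp only [zero_add, Real.sqrt_sq (hsinpos y hy)]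
    rw [intervalIntegral.integral_congr heq]
    exact skyrme_sin_w_int
  · refine ⟨1, one_pos, fun ρ hρ _ => ?_⟩
    set c : ℝ := Real.sqrt (ρ + 3/4) - Real.sqrt 3 / 2 with hcdef
    have h34 : Real.sqrt (3/4) = Real.sqrt 3 / 2 := by
      rw [← ha, Real.sqrt_sq ha0]
    have hcpos : 0 < c := by
      have hlt : Real.sqrt (3/4) < Real.sqrt (ρ + 3/4) :=
        Real.sqrt_lt_sqrt (by norm_num) (by linarith)
      rw [h34] at hlt
      rw [hcdef]
      linarith
    have hint1 : IntervalIntegrable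
        (fun y => (Real.sin y + c) * (3/4 - Real.sin y ^ 2)) MeasureTheory.volume 0
        (2 * Real.pi / 3) :=
      ((Real.continuous_sin.add continuous_const).mul
        (continuous_const.sub (Real.continuous_sin.pow 2))).intervalIntegrable _ _
    have hint2 : IntervalIntegrable
        (fun y => Real.sqrt (ρ + Real.sin y ^ 2) * (3/4 - Real.sin y ^ 2))
        MeasureTheory.volume 0 (2 * Real.pi / 3) :=
      ((Real.continuous_sqrt.comp (continuous_const.add
        (Real.continuous_sin.pow 2))).mul
        (continuous_const.sub (Real.continuous_sin.pow 2))).intervalIntegrable _ _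
    have hpt : ∀ y ∈ Set.Icc (0:ℝ) (2 * Real.pi / 3),
        (Real.sin y + c) * (3/4 - Real.sin y ^ 2) ≤
          Real.sqrt (ρ + Real.sin y ^ 2) * (3/4 - Real.sin y ^ 2) := by
      intro y hy
      have hs0 : 0 ≤ Real.sin y := hsinpos y hy
      rcases le_or_gt (Real.sin y) (Real.sqrt 3 / 2) with hle | hlt
      · have hk := skyrme_key ρ (Real.sin y) (Real.sqrt 3 / 2) hρ.le hs0 hle
        rw [ha] at hk
        have hw : 0 ≤ 3/4 - Real.sin y ^ 2 := by nlinarith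
        have : Real.sin y + c ≤ Real.sqrt (ρ + Real.sin y ^ 2) := by
          rw [hcdef]; linarith
        exact mul_le_mul_of_nonneg_right this hw
      · have hk := skyrme_key ρ (Real.sqrt 3 / 2) (Real.sin y) hρ.le ha0 hlt.le
        rw [ha] at hk
        have hw : 3/4 - Real.sin y ^ 2 ≤ 0 := by nlinarith
        have : Real.sqrt (ρ + Real.sin y ^ 2) ≤ Real.sin y + c := by
          rw [hcdef]; linarith
        exact mul_le_mul_of_nonpos_right this hw
    have hmono := intervalIntegral.integral_mono_on hab hint1 hint2 hpt
    have hsplit : (∫ y in (0:ℝ)..(2 * Real.pi / 3),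
        (Real.sin y + c) * (3/4 - Real.sin y ^ 2)) =
        (∫ y in (0:ℝ)..(2 * Real.pi / 3), Real.sin y * (3/4 - Real.sin y ^ 2)) +
        c * (∫ y in (0:ℝ)..(2 * Real.pi / 3), (3/4 - Real.sin y ^ 2)) := by
      rw [← intervalIntegral.integral_const_mul, ← intervalIntegral.integral_add (f := fun y => Real.sin y * (3/4 - Real.sin y ^ 2))
        (g := fun y => c * (3/4 - Real.sin y ^ 2))
        ((Real.continuous_sin.mul (continuous_const.sub
          (Real.continuous_sin.pow 2))).intervalIntegrable _ _)
        ((continuous_const.mul (continuous_const.sub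
          (Real.continuous_sin.pow 2))).intervalIntegrable _ _)]
      congr 1
      ext y
      ring
    rw [hsplit, skyrme_sin_w_int, skyrme_w_int, zero_add] at hmono
    have hwpos : 0 < Real.pi / 6 - Real.sqrt 3 / 8 := by
      have h3 : Real.sqrt 3 < 2 := by
        nlinarith [Real.sq_sqrt (by norm_num : (0:ℝ) ≤ 3), Real.sqrt_nonneg 3]
      nlinarith [Real.pi_gt_three]
    calc (0:ℝ) < c * (Real.pi / 6 - Real.sqrt 3 / 8) := by positivity
      _ ≤ _ := hmono
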